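/- Let α ≥ 0 and f, n ≥ 1, k ≥ 3 be integers with 2·f = 2^α·n·k, not both α = 0 and n = 1, and set D = f² − 2^α·n. Assume D is not a perfect square. Then the simple continued fraction expansion of √D is [f−1; 1, k−2, 1, 2(f−1), 1, k−2, 1, 2(f−1), …]; that is, a₀ = ⌊√D⌋ = f−1 and for every integer i ≥ 0 the partial quotients satisfy a_{4i+1} = 1, a_{4i+2} = k−2, a_{4i+3} = 1, a_{4i+4} = 2(f−1). -/

import Mathlib

/-- The sequence of complete quotients of the simple continued fraction
expansion of `x`: `x₀ = x`, `x_{i+1} = 1/(x_i - ⌊x_i⌋)`. -/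
noncomputable def cfX (x : ℝ) : ℕ → ℝ
  | 0 => x
  | i + 1 => 1 / Int.fract (cfX x i)

/-- The partial quotients of the simple continued fraction expansion of `x`:
`a_i = ⌊x_i⌋`. -/
noncomputable def cfA (x : ℝ) (i : ℕ) : ℤ := ⌊cfX x i⌋

set_option maxHeartbeats 1000000 in
theorem stmt2 (α : ℕ) (f n k : ℤ) (hf : 1 ≤ f) (hn : 1 ≤ n) (hk : 3 ≤ k)
    (hdiv : 2 * f = 2 ^ α * n * k) (hnot : ¬ (α = 0 ∧ n = 1))
    (D : ℤ) (hD : D = f ^ 2 - 2 ^ α * n) (hns : ¬ IsSquare D) :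
    cfA (Real.sqrt D) 0 = f - 1 ∧
      ∀ i : ℕ, cfA (Real.sqrt D) (4 * i + 1) = 1 ∧
        cfA (Real.sqrt D) (4 * i + 2) = k - 2 ∧
        cfA (Real.sqrt D) (4 * i + 3) = 1 ∧
        cfA (Real.sqrt D) (4 * i + 4) = 2 * (f - 1) := by
  clear hns
  set m : ℤ := 2 ^ α * n with hm
  have hm2 : 2 ≤ m := by
    rcases Nat.eq_zero_or_pos α with hα | hα
    · have hn2 : 2 ≤ n := by
        rcases lt_or_eq_of_le hn with h | h
        · omega
        · exact absurd ⟨hα, h.symm⟩ hnot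
      have : m = n := by rw [hm, hα]; ring
      omega
    · have h2 : (2:ℤ) ≤ 2 ^ α := by
        calc (2:ℤ) = 2 ^ 1 := by norm_num
        _ ≤ 2 ^ α := pow_le_pow_right₀ (by norm_num) hα
      have hp : (0:ℤ) < 2 ^ α := by positivity
      nlinarith
  have h2f : 2 * f = m * k := hdiv
  have h3m : 3 * m ≤ 2 * f := by nlinarith
  have hf3 : 3 ≤ f := by omega
  have hQ3 : 3 ≤ 2 * f - 1 - m := by omega
  have hDfm : D = f ^ 2 - m := hD
  have hD0 : (0:ℤ) < D := by nlinarith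
  have hDR : ((D:ℝ)) = (f:ℝ) ^ 2 - (m:ℝ) := by rw [hDfm]; push_cast; ring
  set s := Real.sqrt (D:ℝ) with hsdef
  have hs2 : s ^ 2 = (f:ℝ) ^ 2 - (m:ℝ) := by
    rw [hsdef, Real.sq_sqrt (by exact_mod_cast hD0.le), hDR]
  have hs0 : 0 ≤ s := Real.sqrt_nonneg _
  have hMR : (2:ℝ) ≤ (m:ℝ) := by exact_mod_cast hm2
  have hQR : (3:ℝ) ≤ 2 * (f:ℝ) - 1 - (m:ℝ) := by exact_mod_cast hQ3
  have h2fR : 2 * (f:ℝ) = (m:ℝ) * (k:ℝ) := by exact_mod_cast h2f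
  have hkR : (3:ℝ) ≤ (k:ℝ) := by exact_mod_cast hk
  have hfR : (3:ℝ) ≤ (f:ℝ) := by exact_mod_cast hf3
  have hlb : ((f:ℝ) - 1) < s := by nlinarith
  have hub : s < (f:ℝ) := by nlinarith
  have hd1 : (0:ℝ) < s - f + 1 := by nlinarith
  have hd2 : (0:ℝ) < s - f + m := by nlinarith
  have hQ0 : (0:ℝ) < 2 * (f:ℝ) - 1 - m := by nlinarith
  have hM0 : (0:ℝ) < (m:ℝ) := by nlinarith
  -- floors
  have hfl0 : ⌊s⌋ = f - 1 := by
    rw [Int.floor_eq_iff]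
    constructor
    · push_cast; nlinarith
    · push_cast; nlinarith
  have hfl1 : ⌊(s + f - 1) / (2 * (f:ℝ) - 1 - m)⌋ = 1 := by
    rw [Int.floor_eq_iff]
    constructor
    · rw [le_div_iff₀ hQ0]; push_cast; nlinarith
    · rw [div_lt_iff₀ hQ0]; push_cast; nlinarith
  have hfl2 : ⌊(s + f - m) / (m:ℝ)⌋ = k - 2 := by
    rw [Int.floor_eq_iff]
    constructor
    · rw [le_div_iff₀ hM0]; push_cast; nlinarith [h2fR, hlb, hMR]
    · rw [div_lt_iff₀ hM0]; push_cast; nlinarith [h2fR, hub]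
  have hfl3 : ⌊(s + f - m) / (2 * (f:ℝ) - 1 - m)⌋ = 1 := by
    rw [Int.floor_eq_iff]
    constructor
    · rw [le_div_iff₀ hQ0]; push_cast; nlinarith
    · rw [div_lt_iff₀ hQ0]; push_cast; nlinarith
  have hfl4 : ⌊s + (f:ℝ) - 1⌋ = 2 * (f - 1) := by
    rw [Int.floor_eq_iff]
    constructor
    · push_cast; nlinarith
    · push_cast; nlinarith
  -- fractional-part steps
  have hfr0 : 1 / Int.fract s = (s + f - 1) / (2 * (f:ℝ) - 1 - m) := by
    rw [Int.fract, hfl0]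
    push_cast
    rw [div_eq_div_iff (ne_of_gt (by nlinarith)) (ne_of_gt hQ0)]
    nlinarith [hs2]
  have hfr1 : 1 / Int.fract ((s + f - 1) / (2 * (f:ℝ) - 1 - m))
      = (s + f - m) / (m:ℝ) := by
    rw [Int.fract, hfl1]
    push_cast
    rw [div_sub' (ne_of_gt hQ0)]
    rw [one_div_div]
    rw [div_eq_div_iff (ne_of_gt (by nlinarith)) (ne_of_gt hM0)]
    nlinarith [hs2]
  have hfr2 : 1 / Int.fract ((s + f - m) / (m:ℝ))
      = (s + f - m) / (2 * (f:ℝ) - 1 - m) := by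
    rw [Int.fract, hfl2]
    push_cast
    rw [div_sub' (ne_of_gt hM0)]
    rw [one_div_div]
    rw [div_eq_div_iff (ne_of_gt (by nlinarith)) (ne_of_gt hQ0)]
    nlinarith [hs2]
  have hfr3 : 1 / Int.fract ((s + f - m) / (2 * (f:ℝ) - 1 - m))
      = s + (f:ℝ) - 1 := by
    rw [Int.fract, hfl3]
    push_cast
    rw [div_sub' (ne_of_gt hQ0)]
    rw [one_div_div]
    rw [div_eq_iff (by nlinarith)]
    nlinarith [hs2]
  have hfr4 : 1 / Int.fract (s + (f:ℝ) - 1)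
      = (s + f - 1) / (2 * (f:ℝ) - 1 - m) := by
    rw [Int.fract, hfl4]
    push_cast
    rw [div_eq_div_iff (ne_of_gt (by nlinarith)) (ne_of_gt hQ0)]
    nlinarith [hs2]
  have cf_succ : ∀ i, cfX s (i + 1) = 1 / Int.fract (cfX s i) := fun i => rfl
  have hX1 : ∀ i, cfX s (4 * i + 1) = (s + f - 1) / (2 * (f:ℝ) - 1 - m) := by
    intro i
    induction i with
    | zero =>
      have : cfX s 1 = 1 / Int.fract (cfX s 0) := rfl
      rw [show 4 * 0 + 1 = 1 by norm_num, this]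
      show 1 / Int.fract s = _
      exact hfr0
    | succ j ih =>
      have e : 4 * (j + 1) + 1 = (4 * j + 1) + 1 + 1 + 1 + 1 := by ring
      rw [e, cf_succ, cf_succ, cf_succ, cf_succ, ih, hfr1, hfr2, hfr3, hfr4]
  refine ⟨hfl0, fun i => ?_⟩
  have e2 : cfX s (4 * i + 2) = (s + f - m) / (m:ℝ) := by
    rw [show 4 * i + 2 = (4 * i + 1) + 1 by ring, cf_succ, hX1 i, hfr1]
  have e3 : cfX s (4 * i + 3) = (s + f - m) / (2 * (f:ℝ) - 1 - m) := by
    rw [show 4 * i + 3 = (4 * i + 2) + 1 by ring, cf_succ, e2, hfr2]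
  have e4 : cfX s (4 * i + 4) = s + (f:ℝ) - 1 := by
    rw [show 4 * i + 4 = (4 * i + 3) + 1 by ring, cf_succ, e3, hfr3]
  refine ⟨?_, ?_, ?_, ?_⟩
  · show ⌊cfX s (4 * i + 1)⌋ = 1
    rw [hX1 i, hfl1]
  · show ⌊cfX s (4 * i + 2)⌋ = k - 2
    rw [e2, hfl2]
  · show ⌊cfX s (4 * i + 3)⌋ = 1
    rw [e3, hfl3]
  · show ⌊cfX s (4 * i + 4)⌋ = 2 * (f - 1)
    rw [e4, hfl4]
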